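/- Let (G, u) be an abelian interpolation group with order unit u. Then (G, u) satisfies general comparability if and only if the effect algebra [0, u], equipped with the compression base (U_p)_{p∈E_S} where E_S is the set of sharp elements and U_p(a) = a ∧ p, has the b-comparability property. -/

import Mathlib

/- Common definitions: effect algebras, compression bases, spectrality -/

attribute [local instance 0] Classical.propDecidable

universe u

structure EffectAlgebra (E : Type u) where
  padd : E → E → Option E
  zero : E
  one : E
  comm : ∀ a b, padd a b = padd b a
  assoc : ∀ a b c ab abc, padd a b = some ab → padd ab c = some abc →
      ∃ bc, padd b c = some bc ∧ padd a bc = some abc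
  orth_exists : ∀ a, ∃ x, padd a x = some one
  orth_unique : ∀ a x y, padd a x = some one → padd a y = some one → x = y
  add_one : ∀ a b, padd a one = some b → a = zero

namespace EffectAlgebra

variable {E : Type u} (EA : EffectAlgebra E)

/-- `a ⊥ b` and `a ⊕ b = c`. -/
def le (a b : E) : Prop := ∃ c, EA.padd a c = some b

/-- the orthosupplement `a'`. -/
noncomputable def compl (a : E) : E := (EA.orth_exists a).choose

/-- `b ⊖ a` (the element `c` with `a ⊕ c = b`, when it exists). -/
noncomputable def osub (b a : E) : E :=
  if h : ∃ c, EA.padd a c = some b then h.choose else EA.zero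

/-- the value of `a ⊕ b` (defaulting to `0` when undefined). -/
noncomputable def oplusD (a b : E) : E := (EA.padd a b).getD EA.zero

def IsSharp (a : E) : Prop := ∀ x, EA.le x a → EA.le x (EA.compl a) → x = EA.zero

/-- sub-effect algebra. -/
def SubEA (P : Set E) : Prop :=
  EA.zero ∈ P ∧ EA.one ∈ P ∧ (∀ a ∈ P, EA.compl a ∈ P) ∧
    ∀ a ∈ P, ∀ b ∈ P, ∀ c, EA.padd a b = some c → c ∈ P

/-- Mackey compatibility: `a = a₁ ⊕ c`, `b = b₁ ⊕ c` with `a₁ ⊕ b₁ ⊕ c` defined. -/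
def Mackey (a b : E) : Prop :=
  ∃ a1 b1 c d e, EA.padd a1 b1 = some d ∧ EA.padd d c = some e ∧
    EA.padd a1 c = some a ∧ EA.padd b1 c = some b

def Additive (J : E → E) : Prop :=
  ∀ a b c, EA.padd a b = some c → EA.padd (J a) (J b) = some (J c)

def Retraction (J : E → E) : Prop :=
  EA.Additive J ∧ ∀ a, EA.le a (J EA.one) → J a = a

def Compression (J : E → E) : Prop :=
  EA.Retraction J ∧ ∀ a, (J a = EA.zero ↔ EA.le a (EA.compl (J EA.one)))

/-- `I` is a supplement of `J`: `Ker J = ran I` and `Ker I = ran J`. -/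
def Supplement (I J : E → E) : Prop :=
  (∀ a, J a = EA.zero ↔ ∃ b, I b = a) ∧ (∀ a, I a = EA.zero ↔ ∃ b, J b = a)

/-- the `n`-fold sum `n·a`, when defined. -/
def nsmulE : ℕ → E → Option E
  | 0, _ => some EA.zero
  | n + 1, a => (nsmulE n a).bind fun b => EA.padd a b

def ArchimedeanEA : Prop :=
  ∀ a : E, (∀ n : ℕ, ∃ b, EA.nsmulE n a = some b) → a = EA.zero

/-- a state on an effect algebra. -/
def IsState (s : E → ℝ) : Prop :=
  s EA.one = 1 ∧ (∀ a, 0 ≤ s a ∧ s a ≤ 1) ∧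
    ∀ a b c, EA.padd a b = some c → s c = s a + s b

noncomputable def partialSum (f : ℕ → E) : ℕ → E
  | 0 => EA.zero
  | n + 1 => EA.oplusD (partialSum f n) (f n)

/-- σ-additivity of a state: if all partial sums of an orthogonal sequence are defined
and the orthosum (= supremum of the partial sums) exists, the state is countably additive. -/
def SigmaAdditive (s : E → ℝ) : Prop :=
  ∀ f : ℕ → E, ∀ b : E,
    (∀ n, ∃ c, EA.padd (EA.partialSum f n) (f n) = some c) →
    (∀ n, EA.le (EA.partialSum f n) b) →
    (∀ c, (∀ n, EA.le (EA.partialSum f n) c) → EA.le b c) →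
    Filter.Tendsto (fun n => ∑ i ∈ Finset.range n, s (f i)) Filter.atTop (nhds (s b))

/-- A compression base: a family of compressions indexed by a sub-effect algebra `P`
such that each `p ∈ P` is the focus of `J p`, and Mackey compatible projections
compose to a projection. -/
structure CompressionBase {E : Type u} (EA : EffectAlgebra E) where
  P : Set E
  J : E → E → E
  sub : EA.SubEA P
  compr : ∀ p ∈ P, EA.Compression (J p)
  focus : ∀ p ∈ P, J p EA.one = p
  mackey : ∀ p ∈ P, ∀ q ∈ P, EA.Mackey p q → ∃ r ∈ P, J p ∘ J q = J r

variable (CB : CompressionBase EA)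

/-- `a ∈ C(p)`:  `a = J_p(a) ⊕ J_{p'}(a)`. -/
def inC (a p : E) : Prop :=
  EA.padd (CB.J p a) (CB.J (EA.compl p) a) = some a

/-- `PC(a) = {p ∈ P : a ∈ C(p)}`. -/
def PC (a : E) : Set E := {p | p ∈ CB.P ∧ inC EA CB a p}

/-- the bicommutant `P(a)`. -/
def bicomm (a : E) : Set E :=
  {p | p ∈ PC EA CB a ∧ ∀ q ∈ PC EA CB a, inC EA CB p q}

/-- `PC(A)` for a set `A ⊆ E`. -/
def PCset (A : Set E) : Set E := {p | p ∈ CB.P ∧ ∀ a ∈ A, inC EA CB a p}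

/-- `P(Q) = PC(PC(Q) ∪ Q)`. -/
def Pset (Q : Set E) : Set E := PCset EA CB (PCset EA CB Q ∪ Q)

/-- `P_≤(e,f)`. -/
def Ple (e f : E) : Set E :=
  {p | p ∈ Pset EA CB {e, f} ∧ EA.le (CB.J p e) (CB.J p f) ∧
    EA.le (CB.J (EA.compl p) f) (CB.J (EA.compl p) e)}

/-- a Boolean subalgebra of `P`: a sub-effect algebra of `E` contained in `P`
whose elements are pairwise Mackey compatible, with witnesses inside. -/
def BooleanSub (B : Set E) : Prop :=
  B ⊆ CB.P ∧ EA.SubEA B ∧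
    ∀ p ∈ B, ∀ q ∈ B, ∃ p1 ∈ B, ∃ q1 ∈ B, ∃ c ∈ B, ∃ d e,
      EA.padd p1 q1 = some d ∧ EA.padd d c = some e ∧
      EA.padd p1 c = some p ∧ EA.padd q1 c = some q

/-- `a` is a b-element with associated Boolean subalgebra `B`. -/
def IsBElementWith (a : E) (B : Set E) : Prop :=
  BooleanSub EA CB B ∧ ∀ p ∈ CB.P, (inC EA CB a p ↔ ∀ b ∈ B, inC EA CB b p)

def IsBElement (a : E) : Prop := ∃ B, IsBElementWith EA CB a B

def BProperty : Prop := ∀ a : E, IsBElement EA CB a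

/-- commuting of b-elements: `e C f` iff `P(e) ↔ P(f)`. -/
def CommuteEl (e f : E) : Prop :=
  ∀ p ∈ bicomm EA CB e, ∀ q ∈ bicomm EA CB f, EA.Mackey p q

def BComparability : Prop :=
  BProperty EA CB ∧ ∀ e f : E, CommuteEl EA CB e f → (Ple EA CB e f).Nonempty

def IsProjCover (a p : E) : Prop :=
  p ∈ CB.P ∧ ∀ q ∈ CB.P, (EA.le a q ↔ EA.le p q)

def ProjCoverProp : Prop := ∀ a : E, ∃ p, IsProjCover EA CB a p

def Spectral : Prop := ProjCoverProp EA CB ∧ BComparability EA CB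

/-- a block of `P`: a maximal set of pairwise Mackey compatible projections. -/
def IsBlock (B : Set E) : Prop :=
  B ⊆ CB.P ∧ (∀ p ∈ B, ∀ q ∈ B, EA.Mackey p q) ∧
    ∀ B' : Set E, B' ⊆ CB.P → (∀ p ∈ B', ∀ q ∈ B', EA.Mackey p q) → B ⊆ B' → B' = B

/-- the C-block `C(B)`. -/
def Cblock (B : Set E) : Set E := {a | ∀ p ∈ B, inC EA CB a p}

/-- `(f − e)_+` (the positive part, defined when `P_≤(e,f)` is nonempty). -/
noncomputable def posPart (e f : E) : E :=
  if h : (Ple EA CB e f).Nonempty then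
    EA.osub (CB.J h.some f) (CB.J h.some e)
  else EA.zero

noncomputable def projCover (a : E) : E :=
  if h : ∃ p, IsProjCover EA CB a p then h.choose else EA.zero

def IsMeetP (p q m : E) : Prop :=
  m ∈ CB.P ∧ EA.le m p ∧ EA.le m q ∧ ∀ s ∈ CB.P, EA.le s p → EA.le s q → EA.le s m

/-- `p ∧ q` in `P`. -/
noncomputable def pmeet (p q : E) : E :=
  if h : ∃ m, IsMeetP EA CB p q m then h.choose else EA.zero

/-- infimum of a set of projections in `P`. -/
def IsInfP (S : Set E) (m : E) : Prop :=
  m ∈ CB.P ∧ (∀ s ∈ S, EA.le m s) ∧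
    ∀ t ∈ CB.P, (∀ s ∈ S, EA.le t s) → EA.le t m

/-! Relative (to a projection `q`, i.e. computed in the interval `[0,q]`) notions. -/

def Pq (q : E) : Set E := {p | p ∈ CB.P ∧ EA.le p q}

def inCq (q a p : E) : Prop :=
  EA.padd (CB.J p a) (CB.J (EA.osub q p) a) = some a

def PCq (q a : E) : Set E := {p | p ∈ Pq EA CB q ∧ inCq EA CB q a p}

def bicommq (q a : E) : Set E :=
  {p | p ∈ PCq EA CB q a ∧ ∀ r ∈ PCq EA CB q a, inCq EA CB q p r}

def PCsetq (q : E) (A : Set E) : Set E :=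
  {p | p ∈ Pq EA CB q ∧ ∀ a ∈ A, inCq EA CB q a p}

def Psetq (q : E) (Q : Set E) : Set E := PCsetq EA CB q (PCsetq EA CB q Q ∪ Q)

def Pleq (q e f : E) : Set E :=
  {p | p ∈ Psetq EA CB q {e, f} ∧ EA.le (CB.J p e) (CB.J p f) ∧
    EA.le (CB.J (EA.osub q p) f) (CB.J (EA.osub q p) e)}

noncomputable def posPartq (q e f : E) : E :=
  if h : (Pleq EA CB q e f).Nonempty then
    EA.osub (CB.J h.some f) (CB.J h.some e)
  else EA.zero

def IsProjCoverq (q a p : E) : Prop :=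
  p ∈ Pq EA CB q ∧ ∀ s ∈ Pq EA CB q, (EA.le a s ↔ EA.le p s)

noncomputable def projCoverq (q a : E) : E :=
  if h : ∃ p, IsProjCoverq EA CB q a p then h.choose else EA.zero

def Mackeyq (q a b : E) : Prop :=
  ∃ a1 b1 c d e, EA.padd a1 b1 = some d ∧ EA.padd d c = some e ∧ EA.le e q ∧
    EA.padd a1 c = some a ∧ EA.padd b1 c = some b

def SubEAq (q : E) (F : Set E) : Prop :=
  EA.zero ∈ F ∧ q ∈ F ∧ (∀ x ∈ F, EA.osub q x ∈ F) ∧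
    ∀ x ∈ F, ∀ y ∈ F, ∀ z, EA.padd x y = some z → EA.le z q → z ∈ F

def BooleanSubq (q : E) (B : Set E) : Prop :=
  B ⊆ Pq EA CB q ∧ SubEAq EA q B ∧
    ∀ p ∈ B, ∀ r ∈ B, ∃ p1 ∈ B, ∃ r1 ∈ B, ∃ c ∈ B, ∃ d e,
      EA.padd p1 r1 = some d ∧ EA.padd d c = some e ∧ EA.le e q ∧
      EA.padd p1 c = some p ∧ EA.padd r1 c = some r

def IsBElementq (q a : E) : Prop :=
  ∃ B, BooleanSubq EA CB q B ∧
    ∀ p ∈ Pq EA CB q, (inCq EA CB q a p ↔ ∀ b ∈ B, inCq EA CB q b p)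

def BPropertyq (q : E) : Prop := ∀ a : E, EA.le a q → IsBElementq EA CB q a

def CommuteElq (q e f : E) : Prop :=
  ∀ p ∈ bicommq EA CB q e, ∀ r ∈ bicommq EA CB q f, Mackeyq EA q p r

def BComparabilityq (q : E) : Prop :=
  BPropertyq EA CB q ∧ ∀ e f : E, EA.le e q → EA.le f q →
    CommuteElq EA CB q e f → (Pleq EA CB q e f).Nonempty

/-! The binary spectral resolution. -/

/-- `λ(w) = Σ_j w_j 2^{-j}` (head of the list is the first digit). -/
def lamOf : List Bool → ℚ
  | [] => 0
  | b :: t => ((if b then 1 else 0) + lamOf t) / 2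

/-- all binary strings of length `n`, in lexicographic order. -/
def allStrings : ℕ → List (List Bool)
  | 0 => [[]]
  | n + 1 => (allStrings n).flatMap fun w => [w ++ [false], w ++ [true]]

noncomputable def listSum (l : List E) : E :=
  l.foldl (fun acc x => EA.oplusD acc x) EA.zero

/-- the families `(u_w, c_w)`; the binary string is given in reversed order
(head of the list is the last digit). -/
noncomputable def ucAux (a : E) : List Bool → E × E
  | [] => (projCover EA CB a, a)
  | bit :: t =>
      let p := ucAux a t
      let q := p.1
      let cw := p.2
      let cw' := EA.osub q cw
      let d := posPartq EA CB q cw' cw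
      let u0 := pmeet EA CB (EA.osub q (projCoverq EA CB q d)) q
      if bit then (pmeet EA CB q (EA.compl u0), d)
      else (u0, EA.oplusD (CB.J u0 cw) (CB.J u0 cw))

noncomputable def uw (a : E) (w : List Bool) : E := (ucAux EA CB a w.reverse).1

noncomputable def cw (a : E) (w : List Bool) : E := (ucAux EA CB a w.reverse).2

/-- the binary spectral projection `p_{a,λ(w1)}`. -/
noncomputable def pbin (a : E) (w : List Bool) : E :=
  listSum EA (EA.compl (projCover EA CB a) ::
    (((allStrings (w.length + 1)).filter
        fun v => lamOf v ≤ lamOf (w ++ [false])).map (uw EA CB a)))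

def Dyadic01 (x : ℚ) : Prop := ∃ n k : ℕ, (k : ℚ) ≤ 2 ^ n ∧ x = (k : ℚ) / 2 ^ n

/-- the binary spectral resolution `p_{a,λ}`, for dyadic rationals `λ ∈ [0,1]`. -/
noncomputable def pdyad (a : E) (x : ℚ) : E :=
  if x ≤ 0 then EA.compl (projCover EA CB a)
  else if 1 ≤ x then EA.one
  else if h : ∃ w : List Bool, lamOf (w ++ [true]) = x then pbin EA CB a h.choose
  else EA.zero

/-- the rational spectral resolution `p_{a,λ} = ⋀_{μ > λ, μ dyadic} p_{a,μ}`. -/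
noncomputable def ratRes (a : E) (x : ℚ) : E :=
  if h : ∃ m, IsInfP EA CB {y | ∃ μ, Dyadic01 μ ∧ x < μ ∧ y = pdyad EA CB a μ} m
  then h.choose else EA.zero

/-- the partial maps `f_0(b) = 2b`, `f_1(b) = (2b')'` computed in `[0,uu]`. -/
noncomputable def fstep (uu b : E) (bit : Bool) : Option E :=
  if bit then
    (if EA.le (EA.osub uu b) b
      then some (EA.osub uu (EA.oplusD (EA.osub uu b) (EA.osub uu b))) else none)
  else
    (if EA.le b (EA.osub uu b) then some (EA.oplusD b b) else none)

/-- `f_w = f_{w_n} ∘ ⋯ ∘ f_{w_1}`, computed in `[0,uu]`, as a partial map. -/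
noncomputable def fword (uu : E) (w : List Bool) (b : E) : Option E :=
  w.foldl (fun ob bit => ob.bind fun x => fstep EA uu x bit) (some b)

end EffectAlgebra

namespace EffectAlgebra

/-- `u` is an order unit of the partially ordered abelian group `G`. -/
def OrderUnit {G : Type u} [AddCommGroup G] [PartialOrder G] (unit : G) : Prop :=
  0 ≤ unit ∧ ∀ g : G, ∃ n : ℕ, g ≤ n • unit

/-- the Riesz interpolation property. -/
def RieszInterp (G : Type u) [AddCommGroup G] [PartialOrder G] : Prop :=
  ∀ a b c d : G, a ≤ c → a ≤ d → b ≤ c → b ≤ d → ∃ x, a ≤ x ∧ b ≤ x ∧ x ≤ c ∧ x ≤ d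

/-- `p ∈ [0,u]` is sharp: `p ∧ (u − p) = 0`. -/
def SharpG {G : Type u} [AddCommGroup G] [PartialOrder G] (unit p : G) : Prop :=
  0 ≤ p ∧ p ≤ unit ∧ ∀ x : G, 0 ≤ x → x ≤ p → x ≤ unit - p → x = 0

/-- membership in the convex subgroup `G_p` generated by `p`. -/
def inGp {G : Type u} [AddCommGroup G] [PartialOrder G] (p g : G) : Prop :=
  ∃ n : ℕ, -(n • p) ≤ g ∧ g ≤ n • p

/-- `U` is the projection `Ũ_p` of `G` onto `G_p` with kernel `G_{p'}`. -/
def IsIdealProj {G : Type u} [AddCommGroup G] [PartialOrder G]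
    (unit p : G) (U : G → G) : Prop :=
  (∀ x y, U (x + y) = U x + U y) ∧ (∀ x y : G, x ≤ y → U x ≤ U y) ∧
    (∀ g, inGp p (U g)) ∧ (∀ g, inGp (unit - p) (g - U g)) ∧
    (∀ g, inGp p g → U g = g)

end EffectAlgebra


/-! ### Auxiliary lemmas for Statement 7 -/

namespace Stmt7Aux

open EffectAlgebra

variable {G : Type u} [AddCommGroup G] [PartialOrder G]
  [CovariantClass G G (· + ·) (· ≤ ·)]

lemma inGp_of_interval {p x : G} (h0 : 0 ≤ x) (h1 : x ≤ p) : inGp p x :=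
  ⟨1, by
    rw [one_nsmul]
    exact ⟨le_trans (neg_nonpos.mpr (le_trans h0 h1)) h0, h1⟩⟩

lemma inGp_self {p : G} (h : 0 ≤ p) : inGp p p := inGp_of_interval h le_rfl

lemma inGp_add {p x y : G} (hx : inGp p x) (hy : inGp p y) : inGp p (x + y) := by
  obtain ⟨n, hn1, hn2⟩ := hx
  obtain ⟨m, hm1, hm2⟩ := hy
  refine ⟨n + m, ?_, ?_⟩
  · rw [add_nsmul, neg_add]; exact add_le_add hn1 hm1
  · rw [add_nsmul]; exact add_le_add hn2 hm2

lemma inGp_neg {p x : G} (hx : inGp p x) : inGp p (-x) := by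
  obtain ⟨n, hn1, hn2⟩ := hx
  exact ⟨n, neg_le_neg_iff.mpr hn2, by simpa using neg_le_neg_iff.mpr hn1⟩

lemma inGp_sub {p x y : G} (hx : inGp p x) (hy : inGp p y) : inGp p (x - y) := by
  rw [sub_eq_add_neg]; exact inGp_add hx (inGp_neg hy)

lemma inGp_mono {p q x : G} (hpq : p ≤ q) (hx : inGp p x) : inGp q x := by
  obtain ⟨n, hn1, hn2⟩ := hx
  exact ⟨n, le_trans (neg_le_neg_iff.mpr (nsmul_le_nsmul_right hpq n)) hn1,
    le_trans hn2 (nsmul_le_nsmul_right hpq n)⟩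

/-- Riesz decomposition from interpolation. -/
lemma riesz_decomp (hG : RieszInterp G) {x y z : G}
    (hz0 : 0 ≤ z) (hx : 0 ≤ x) (hy : 0 ≤ y) (hzxy : z ≤ x + y) :
    ∃ z₁ z₂ : G, z = z₁ + z₂ ∧ 0 ≤ z₁ ∧ z₁ ≤ x ∧ 0 ≤ z₂ ∧ z₂ ≤ y := by
  obtain ⟨w, hw1, hw2, hw3, hw4⟩ := hG 0 (z - y) z x hz0 hx
    (by simpa using sub_le_self z hy) (sub_le_iff_le_add.mpr hzxy)
  refine ⟨w, z - w, by abel, hw1, hw4, sub_nonneg.mpr hw3, ?_⟩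
  have := sub_le_sub_left hw2 z
  simpa using this

/-- strengthened sharpness: `0 ≤ x ≤ n•p`, `x ≤ m•(u-p)` implies `x = 0`. -/
lemma sharp_nsmul (hG : RieszInterp G) {u p : G} (hp : SharpG u p) :
    ∀ k n m : ℕ, ∀ x : G, n + m ≤ k → 0 ≤ x → x ≤ n • p → x ≤ m • (u - p) → x = 0 := by
  have hp0 : 0 ≤ p := hp.1
  have hc0 : 0 ≤ u - p := sub_nonneg.mpr hp.2.1
  intro k
  induction k with
  | zero =>
    intro n m x hk h0 h1 h2
    have hn : n = 0 := by omega
    rw [hn, zero_nsmul] at h1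
    exact le_antisymm h1 h0
  | succ k ih =>
    intro n m x hk h0 h1 h2
    match n, m with
    | 0, m =>
      rw [zero_nsmul] at h1
      exact le_antisymm h1 h0
    | n+1, 0 =>
      rw [zero_nsmul] at h2
      exact le_antisymm h2 h0
    | n+1, m+1 =>
      rw [succ_nsmul] at h1
      obtain ⟨z₁, z₂, hz, hz10, hz1, hz20, hz2⟩ :=
        riesz_decomp hG h0 (nsmul_nonneg hp0 n) hp0 h1
      have hz1x : z₁ ≤ x := by
        rw [hz]; simpa using add_le_add_left hz20 z₁
      have hz1zero : z₁ = 0 :=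
        ih n (m+1) z₁ (by omega) hz10 hz1 (le_trans hz1x h2)
      have hxz : x = z₂ := by rw [hz, hz1zero, zero_add]
      have hxp : x ≤ p := hxz ▸ hz2
      rw [succ_nsmul] at h2
      obtain ⟨s, t, hst, hs0, hsm, ht0, htc⟩ :=
        riesz_decomp hG h0 (nsmul_nonneg hc0 m) hc0 h2
      have hsx : s ≤ x := by
        rw [hst]; simpa using add_le_add_left ht0 s
      have hszero : s = 0 :=
        ih 1 m s (by omega) hs0 (by rw [one_nsmul]; exact le_trans hsx hxp) hsm
      have hxt : x = t := by rw [hst, hszero, zero_add]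
      exact hp.2.2 x h0 hxp (hxt ▸ htc)

lemma Gp_inter (hG : RieszInterp G) {u p : G} (hp : SharpG u p) {x : G}
    (h1 : inGp p x) (h2 : inGp (u - p) x) : x = 0 := by
  have key : ∀ y : G, inGp p y → inGp (u - p) y → y ≤ 0 := by
    rintro y ⟨n, hn1, hn2⟩ ⟨m, hm1, hm2⟩
    obtain ⟨z, hz1, hz2, hz3, hz4⟩ := hG y 0 (n • p) (m • (u - p)) hn2 hm2
      (nsmul_nonneg hp.1 n) (nsmul_nonneg (sub_nonneg.mpr hp.2.1) m)
    have := sharp_nsmul hG hp (n + m) n m z le_rfl hz2 hz3 hz4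
    exact this ▸ hz1
  have hA := key x h1 h2
  have hB := key (-x) (inGp_neg h1) (inGp_neg h2)
  have : 0 ≤ x := by simpa using neg_le_neg_iff.mpr hB
  exact le_antisymm hA this

lemma sharp_compl {u p : G} (hp : SharpG u p) : SharpG u (u - p) := by
  refine ⟨sub_nonneg.mpr hp.2.1, by simpa using sub_le_self u hp.1, ?_⟩
  intro x h0 h1 h2
  rw [sub_sub_cancel] at h2
  exact hp.2.2 x h0 h2 h1

section UtLemmas

variable (hG : RieszInterp G) {u : G} (Ut : G → G → G)
variable (hUt : ∀ p : G, SharpG u p → IsIdealProj u p (Ut p))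
variable {p : G} (hp : SharpG u p)

include hUt hp

lemma Ut_zero : Ut p 0 = 0 := by
  have h := (hUt p hp).1 0 0
  rw [add_zero] at h
  exact left_eq_add.mp h

lemma Ut_neg (x : G) : Ut p (-x) = -(Ut p x) := by
  have h := (hUt p hp).1 x (-x)
  rw [add_neg_cancel, Ut_zero Ut hUt hp] at h
  exact eq_neg_of_add_eq_zero_right h.symm

lemma Ut_sub (x y : G) : Ut p (x - y) = Ut p x - Ut p y := by
  have h := (hUt p hp).1 (x - y) y
  rw [sub_add_cancel] at h
  rw [h]; abel

lemma Ut_nsmul (n : ℕ) (x : G) : Ut p (n • x) = n • Ut p x := by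
  induction n with
  | zero => simpa using Ut_zero Ut hUt hp
  | succ n ih =>
    rw [succ_nsmul, succ_nsmul, (hUt p hp).1, ih]

lemma Ut_nonneg {x : G} (h : 0 ≤ x) : 0 ≤ Ut p x := by
  have := (hUt p hp).2.1 0 x h
  rwa [Ut_zero Ut hUt hp] at this

lemma Ut_fix_interval {x : G} (h0 : 0 ≤ x) (h1 : x ≤ p) : Ut p x = x :=
  (hUt p hp).2.2.2.2 x (inGp_of_interval h0 h1)

lemma Ut_self : Ut p p = p := Ut_fix_interval Ut hUt hp hp.1 le_rfl

include hG

lemma Ut_ker {x : G} (h : inGp (u - p) x) : Ut p x = 0 := by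
  have hm : inGp p (Ut p x) := (hUt p hp).2.2.1 x
  have hk : inGp (u - p) (x - Ut p x) := (hUt p hp).2.2.2.1 x
  have h2 : inGp (u - p) (Ut p x) := by
    have := inGp_sub h hk
    simpa using this
  exact Gp_inter hG hp hm h2

lemma Ut_compl_zero : Ut p (u - p) = 0 :=
  Ut_ker hG Ut hUt hp (inGp_self (sub_nonneg.mpr hp.2.1))

lemma Ut_unit : Ut p u = p := by
  have h : u = p + (u - p) := by abel
  calc Ut p u = Ut p (p + (u - p)) := by rw [← h]
    _ = Ut p p + Ut p (u - p) := (hUt p hp).1 _ _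
    _ = p + 0 := by rw [Ut_self Ut hUt hp, Ut_compl_zero hG Ut hUt hp]
    _ = p := add_zero p

lemma Ut_unique {g x : G} (h1 : inGp p x) (h2 : inGp (u - p) (g - x)) :
    Ut p g = x := by
  have hd1 : inGp p (Ut p g - x) := inGp_sub ((hUt p hp).2.2.1 g) h1
  have hd2 : inGp (u - p) (Ut p g - x) := by
    have heq : Ut p g - x = (g - x) - (g - Ut p g) := by abel
    rw [heq]
    exact inGp_sub h2 ((hUt p hp).2.2.2.1 g)
  have := Gp_inter hG hp hd1 hd2
  exact sub_eq_zero.mp this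

lemma Ut_compl_apply (g : G) : Ut (u - p) g = g - Ut p g := by
  refine Ut_unique hG Ut hUt (sharp_compl hp) ((hUt p hp).2.2.2.1 g) ?_
  rw [sub_sub_cancel]
  have heq : g - (g - Ut p g) = Ut p g := by abel
  rw [heq]
  exact (hUt p hp).2.2.1 g

lemma Ut_le_of_le {x y : G} (h : x ≤ y) : Ut p x ≤ Ut p y := (hUt p hp).2.1 x y h

lemma Ut_le_self {x : G} (h : 0 ≤ x) : Ut p x ≤ x := by
  have h1 : 0 ≤ Ut (u - p) x := Ut_nonneg Ut hUt (sharp_compl hp) h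
  rw [Ut_compl_apply hG Ut hUt hp] at h1
  simpa using add_le_add_left h1 (Ut p x)

/-- the meet lemma: `Ut p q` is sharp and `Ut (Ut p q) = Ut p ∘ Ut q`. -/
lemma Ut_meet {q : G} (hq : SharpG u q) :
    SharpG u (Ut p q) ∧ Ut p q ≤ p ∧ Ut p q ≤ q ∧
      ∀ g, Ut (Ut p q) g = Ut p (Ut q g) := by
  set m := Ut p q with hm
  have hm0 : 0 ≤ m := Ut_nonneg Ut hUt hp hq.1
  have hmp : m ≤ p := by
    have := Ut_le_of_le hG Ut hUt hp hq.2.1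
    rwa [Ut_unit hG Ut hUt hp] at this
  have hmq : m ≤ q := Ut_le_self hG Ut hUt hp hq.1
  have hsharp : SharpG u m := by
    refine ⟨hm0, le_trans hmp hp.2.1, ?_⟩
    intro x h0 h1 h2
    have hxp : x ≤ p := le_trans h1 hmp
    have hfix : Ut p x = x := Ut_fix_interval Ut hUt hp h0 hxp
    have hxum : Ut p x ≤ Ut p (u - m) := Ut_le_of_le hG Ut hUt hp h2
    have hUm : Ut p m = m := Ut_fix_interval Ut hUt hp hm0 hmp
    have hx2 : x ≤ p - m := by
      rw [hfix, Ut_sub Ut hUt hp, Ut_unit hG Ut hUt hp, hUm] at hxum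
      exact hxum
    have hpmuq : p - m ≤ u - q := by
      have h3 : Ut p (u - q) = p - m := by
        rw [Ut_sub Ut hUt hp, Ut_unit hG Ut hUt hp]
      have h4 : Ut p (u - q) ≤ u - q :=
        Ut_le_self hG Ut hUt hp (sub_nonneg.mpr hq.2.1)
      rwa [h3] at h4
    exact hq.2.2 x h0 (le_trans h1 hmq) (le_trans hx2 hpmuq)
  refine ⟨hsharp, hmp, hmq, ?_⟩
  intro g
  refine Ut_unique hG Ut hUt hsharp ?_ ?_
  · obtain ⟨n, hn1, hn2⟩ := (hUt q hq).2.2.1 g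
    refine ⟨n, ?_, ?_⟩
    · have := Ut_le_of_le hG Ut hUt hp hn1
      rwa [Ut_neg Ut hUt hp, Ut_nsmul Ut hUt hp] at this
    · have := Ut_le_of_le hG Ut hUt hp hn2
      rwa [Ut_nsmul Ut hUt hp] at this
  · have heq : g - Ut p (Ut q g) = (g - Ut q g) + (Ut q g - Ut p (Ut q g)) := by abel
    rw [heq]
    refine inGp_add ?_ ?_
    · exact inGp_mono (sub_le_sub_left hmq u) ((hUt q hq).2.2.2.1 g)
    · exact inGp_mono (sub_le_sub_left hmp u) ((hUt p hp).2.2.2.1 (Ut q g))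

omit hp

/-- orthogonal sums of sharp elements. -/
lemma Ut_orthsum {r s : G} (hr : SharpG u r) (hs : SharpG u s) (hrs : r + s ≤ u) :
    SharpG u (r + s) ∧ ∀ g, Ut (r + s) g = Ut r g + Ut s g := by
  have hsur : s ≤ u - r := le_sub_iff_add_le.mpr (by rwa [add_comm])
  have hrus : r ≤ u - s := le_sub_iff_add_le.mpr hrs
  have hUrs : Ut r s = 0 := Ut_ker hG Ut hUt hr (inGp_of_interval hs.1 hsur)
  have hUsr : Ut s r = 0 := Ut_ker hG Ut hUt hs (inGp_of_interval hr.1 hrus)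
  have h0rs : 0 ≤ r + s := add_nonneg hr.1 hs.1
  have hsharp : SharpG u (r + s) := by
    refine ⟨h0rs, hrs, ?_⟩
    intro x h0 h1 h2
    have hUrx : Ut r x = 0 := by
      have hle : Ut r x ≤ Ut r (u - (r + s)) := Ut_le_of_le hG Ut hUt hr h2
      have : Ut r (u - (r + s)) = 0 := by
        have heq : u - (r + s) = (u - r) - s := by abel
        rw [heq, Ut_sub Ut hUt hr, Ut_compl_zero hG Ut hUt hr, hUrs, sub_zero]
      rw [this] at hle
      exact le_antisymm hle (Ut_nonneg Ut hUt hr h0)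
    have hx : x = Ut (u - r) x := by
      rw [Ut_compl_apply hG Ut hUt hr, hUrx, sub_zero]
    have hxs : x ≤ s := by
      have hle : Ut (u - r) x ≤ Ut (u - r) (r + s) :=
        Ut_le_of_le hG Ut hUt (sharp_compl hr) h1
      have h5 : Ut (u - r) (r + s) = s := by
        rw [(hUt (u - r) (sharp_compl hr)).1,
          Ut_compl_apply hG Ut hUt hr r, Ut_compl_apply hG Ut hUt hr s,
          Ut_self Ut hUt hr, hUrs, sub_self, sub_zero, zero_add]
      rw [h5] at hle
      rw [hx]; exact hle
    have hxus : x ≤ u - s := by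
      refine le_trans h2 ?_
      have : u - (r + s) = (u - s) - r := by abel
      rw [this]
      simpa using sub_le_self (u - s) hr.1
    exact hs.2.2 x h0 hxs hxus
  refine ⟨hsharp, ?_⟩
  intro g
  refine Ut_unique hG Ut hUt hsharp ?_ ?_
  · refine inGp_add (inGp_mono ?_ ((hUt r hr).2.2.1 g))
      (inGp_mono ?_ ((hUt s hs).2.2.1 g))
    · simpa using add_le_add_left hs.1 r
    · simpa using add_le_add_right hr.1 s
  · have hUsg : Ut s g = Ut s (Ut (u - r) g) := by
      have hsplit : g = Ut r g + Ut (u - r) g := by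
        rw [Ut_compl_apply hG Ut hUt hr]; abel
      have h7 : Ut s (Ut r g) = 0 :=
        Ut_ker hG Ut hUt hs (inGp_mono hrus ((hUt r hr).2.2.1 g))
      calc Ut s g = Ut s (Ut r g + Ut (u - r) g) := by rw [← hsplit]
        _ = Ut s (Ut r g) + Ut s (Ut (u - r) g) := (hUt s hs).1 _ _
        _ = Ut s (Ut (u - r) g) := by rw [h7, zero_add]
    have heq : g - (Ut r g + Ut s g)
        = Ut (u - s) (Ut (u - r) g) := by
      rw [Ut_compl_apply hG Ut hUt hs (Ut (u - r) g), ← hUsg,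
        Ut_compl_apply hG Ut hUt hr g]
      abel
    rw [heq]
    obtain ⟨n, hn1, hn2⟩ := (hUt (u - r) (sharp_compl hr)).2.2.1 g
    have hval : Ut (u - s) (u - r) = u - (r + s) := by
      have hur : u - r = s + (u - (r + s)) := by abel
      have h8 : Ut s (u - (r + s)) = 0 := by
        refine Ut_ker hG Ut hUt hs (inGp_of_interval ?_ ?_)
        · exact sub_nonneg.mpr hrs
        · have : u - (r + s) = (u - s) - r := by abel
          rw [this]; simpa using sub_le_self (u - s) hr.1
      have h9 : Ut s (u - r) = s := by
        rw [hur, (hUt s hs).1, Ut_fix_interval Ut hUt hs hs.1 le_rfl, h8, add_zero]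
      rw [Ut_compl_apply hG Ut hUt hs, h9]
      abel
    refine ⟨n, ?_, ?_⟩
    · have := Ut_le_of_le hG Ut hUt (sharp_compl hs) hn1
      rwa [Ut_neg Ut hUt (sharp_compl hs), Ut_nsmul Ut hUt (sharp_compl hs), hval] at this
    · have := Ut_le_of_le hG Ut hUt (sharp_compl hs) hn2
      rwa [Ut_nsmul Ut hUt (sharp_compl hs), hval] at this

end UtLemmas

section Comp

variable (hG : RieszInterp G) {u : G} (hu0 : 0 ≤ u) (Ut : G → G → G)
variable (hUt : ∀ p : G, SharpG u p → IsIdealProj u p (Ut p))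
variable (IC : ∀ e f : G, 0 ≤ e → e ≤ u → 0 ≤ f → f ≤ u →
    ∃ p, SharpG u p ∧ Ut p e ≤ Ut p f ∧ Ut (u - p) f ≤ Ut (u - p) e)

include hG hu0 hUt IC

lemma comp_base : ∀ g : G, -u ≤ g → g ≤ u →
    ∃ p, SharpG u p ∧ Ut p g ≤ 0 ∧ 0 ≤ Ut (u - p) g := by
  intro g hg1 hg2
  have hz0 : 0 ≤ g + u := by simpa using add_le_add_left hg1 u
  have hzle : g + u ≤ u + u := add_le_add_left hg2 u
  obtain ⟨z₁, z₂, hz, h10, h1u, h20, h2u⟩ := riesz_decomp hG hz0 hu0 hu0 hzle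
  have hf0 : 0 ≤ u - z₂ := sub_nonneg.mpr h2u
  have hfu : u - z₂ ≤ u := by simpa using sub_le_self u h20
  have hg' : g = z₁ + z₂ - u := by
    have : g + u - u = z₁ + z₂ - u := by rw [hz]
    simpa using this
  have hgef : g = z₁ - (u - z₂) := by rw [hg']; abel
  obtain ⟨p, hp, hle1, hle2⟩ := IC z₁ (u - z₂) h10 h1u hf0 hfu
  refine ⟨p, hp, ?_, ?_⟩
  · rw [hgef, Ut_sub Ut hUt hp]
    exact sub_nonpos.mpr hle1
  · rw [hgef, Ut_sub Ut hUt (sharp_compl hp)]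
    exact sub_nonneg.mpr hle2

lemma comp_S : ∀ n : ℕ, ∀ g : G, -u ≤ g → g ≤ (n+1) • u →
    ∃ p, SharpG u p ∧ Ut p g ≤ 0 ∧ 0 ≤ Ut (u - p) g := by
  intro n
  induction n with
  | zero =>
    intro g h1 h2
    rw [one_nsmul] at h2
    exact comp_base hG hu0 Ut hUt IC g h1 h2
  | succ n ih =>
    intro g h1 h2
    obtain ⟨w, hw0, hwg, hwu, hwgu⟩ := hG 0 (g - (n+1) • u) u (g + u) hu0
      (by simpa using add_le_add_left h1 u)
      (sub_le_iff_le_add.mpr (by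
        rw [add_comm]
        rw [← succ_nsmul]
        exact h2))
      (by
        have h' := add_le_add_right
          (le_trans (neg_nonpos.mpr (nsmul_nonneg hu0 (n+1))) hu0) g
        calc g - (n+1) • u = g + -((n+1) • u) := by abel
          _ ≤ g + u := h')
    have hh1 : -u ≤ g - w := by simpa using sub_le_sub_left hwgu g
    have hh2 : g - w ≤ (n+1) • u := by
      have := sub_le_sub_right hwg w
      calc g - w = g - (n+1) • u - w + (n+1) • u := by abel
        _ ≤ w - w + (n+1) • u := by
            exact add_le_add_left (sub_le_sub_right hwg w) _
        _ = (n+1) • u := by abel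
    obtain ⟨p₁, hp₁, H1, H2⟩ := ih (g - w) hh1 hh2
    have hsplit : Ut p₁ g = Ut p₁ w + Ut p₁ (g - w) := by
      have := (hUt p₁ hp₁).1 w (g - w)
      rw [show w + (g - w) = g from by abel] at this
      exact this
    have hg₁u : Ut p₁ g ≤ u := by
      calc Ut p₁ g = Ut p₁ w + Ut p₁ (g - w) := hsplit
        _ ≤ Ut p₁ w + 0 := add_le_add_right H1 _
        _ = Ut p₁ w := add_zero _
        _ ≤ Ut p₁ u := Ut_le_of_le hG Ut hUt hp₁ hwu
        _ = p₁ := Ut_unit hG Ut hUt hp₁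
        _ ≤ u := hp₁.2.1
    have hg₁l : -u ≤ Ut p₁ g := by
      have hA := Ut_le_of_le hG Ut hUt hp₁ h1
      rw [Ut_neg Ut hUt hp₁, Ut_unit hG Ut hUt hp₁] at hA
      exact le_trans (neg_le_neg_iff.mpr hp₁.2.1) hA
    obtain ⟨p₂, hp₂, K1, K2⟩ := comp_base hG hu0 Ut hUt IC (Ut p₁ g) hg₁l hg₁u
    obtain ⟨hsharp, hmp, hmq, hcomp⟩ := Ut_meet hG Ut hUt hp₂ hp₁
    refine ⟨Ut p₂ p₁, hsharp, ?_, ?_⟩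
    · rw [hcomp g]; exact K1
    · rw [Ut_compl_apply hG Ut hUt hsharp g, hcomp g]
      have hA : 0 ≤ Ut (u - p₁) g := by
        have hsplit' : Ut (u - p₁) g = Ut (u - p₁) w + Ut (u - p₁) (g - w) := by
          have := (hUt (u - p₁) (sharp_compl hp₁)).1 w (g - w)
          rw [show w + (g - w) = g from by abel] at this
          exact this
        rw [hsplit']
        exact add_nonneg (Ut_nonneg Ut hUt (sharp_compl hp₁) hw0) H2
      have heq : g - Ut p₂ (Ut p₁ g)
          = Ut (u - p₁) g + (Ut p₁ g - Ut p₂ (Ut p₁ g)) := by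
        rw [Ut_compl_apply hG Ut hUt hp₁ g]; abel
      rw [heq]
      refine add_nonneg hA ?_
      rw [← Ut_compl_apply hG Ut hUt hp₂ (Ut p₁ g)]
      exact K2

lemma comp_T : ∀ m n : ℕ, ∀ g : G, -((m+1) • u) ≤ g → g ≤ (n+1) • u →
    ∃ p, SharpG u p ∧ Ut p g ≤ 0 ∧ 0 ≤ Ut (u - p) g := by
  intro m
  induction m with
  | zero =>
    intro n g h1 h2
    rw [one_nsmul] at h1
    exact comp_S hG hu0 Ut hUt IC n g h1 h2
  | succ m ih =>
    intro n g h1 h2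
    have hneguu : -u ≤ u := le_trans (neg_nonpos.mpr hu0) hu0
    obtain ⟨h', hA, hB, hC, hD⟩ := hG (g - u) (-((m+1) • u)) (g + u) ((n+1) • u)
      (by
        calc g - u = g + -u := by abel
          _ ≤ g + u := add_le_add_right hneguu g)
      (sub_le_iff_le_add.mpr
        (le_trans h2 (by simpa using add_le_add_left hu0 ((n+1) • u))))
      (by
        have he : -((m+1+1) • u) = -((m+1) • u) - u := by rw [succ_nsmul]; abel
        rw [he] at h1
        have := add_le_add_left h1 u
        calc -((m+1) • u) = -((m+1) • u) - u + u := by abel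
          _ ≤ g + u := this)
      (le_trans (neg_nonpos.mpr (nsmul_nonneg hu0 (m+1))) (nsmul_nonneg hu0 (n+1)))
    have hw1 : -u ≤ g - h' := by simpa using sub_le_sub_left hC g
    have hw2 : g - h' ≤ u := by
      have := sub_le_sub_right hA (-u)
      calc g - h' = g - u - h' + u := by abel
        _ ≤ h' - h' + u := add_le_add_left (sub_le_sub_right hA h') u
        _ = u := by abel
    obtain ⟨p₁, hp₁, H1, H2⟩ := ih n h' hB hD
    -- bounds for Ut p₁ g
    have hsplit : ∀ r : G, SharpG u r → Ut r g = Ut r (g - h') + Ut r h' := by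
      intro r hr
      have := (hUt r hr).1 (g - h') h'
      rw [show g - h' + h' = g from by abel] at this
      exact this
    have hg₁u : Ut p₁ g ≤ u := by
      calc Ut p₁ g = Ut p₁ (g - h') + Ut p₁ h' := hsplit p₁ hp₁
        _ ≤ Ut p₁ (g - h') + 0 := add_le_add_right H1 _
        _ = Ut p₁ (g - h') := add_zero _
        _ ≤ Ut p₁ u := Ut_le_of_le hG Ut hUt hp₁ hw2
        _ = p₁ := Ut_unit hG Ut hUt hp₁
        _ ≤ u := hp₁.2.1
    have hg₁l : -((m+1+1) • u) ≤ Ut p₁ g := by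
      have hA' := Ut_le_of_le hG Ut hUt hp₁ h1
      rw [Ut_neg Ut hUt hp₁, Ut_nsmul Ut hUt hp₁, Ut_unit hG Ut hUt hp₁] at hA'
      refine le_trans ?_ hA'
      exact neg_le_neg_iff.mpr (nsmul_le_nsmul_right hp₁.2.1 (m+1+1))
    -- comparability of Ut p₁ g with 0, from the mirrored S-lemma
    obtain ⟨q, hq, L1, L2⟩ := comp_S hG hu0 Ut hUt IC (m+1) (-(Ut p₁ g))
      (by simpa using neg_le_neg_iff.mpr hg₁u)
      (by simpa using neg_le_neg_iff.mpr hg₁l)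
    have Hneg : Ut (u - q) (Ut p₁ g) ≤ 0 := by
      rw [Ut_neg Ut hUt (sharp_compl hq)] at L2
      exact neg_nonneg.mp L2
    have Hpos : 0 ≤ Ut q (Ut p₁ g) := by
      rw [Ut_neg Ut hUt hq] at L1
      exact neg_nonpos.mp L1
    -- bounds for Ut (u - p₁) g
    have hg₂l : -u ≤ Ut (u - p₁) g := by
      have : Ut (u - p₁) (g - h') ≤ Ut (u - p₁) g := by
        calc Ut (u - p₁) (g - h')
            = Ut (u - p₁) (g - h') + 0 := (add_zero _).symm
          _ ≤ Ut (u - p₁) (g - h') + Ut (u - p₁) h' := add_le_add_right H2 _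
          _ = Ut (u - p₁) g := (hsplit (u - p₁) (sharp_compl hp₁)).symm
      refine le_trans ?_ this
      have h5 := Ut_le_of_le hG Ut hUt (sharp_compl hp₁) hw1
      rw [Ut_neg Ut hUt (sharp_compl hp₁), Ut_unit hG Ut hUt (sharp_compl hp₁)] at h5
      refine le_trans ?_ h5
      refine neg_le_neg_iff.mpr ?_
      simpa using sub_le_self u hp₁.1
    have hg₂u : Ut (u - p₁) g ≤ (n+1) • u := by
      have h6 := Ut_le_of_le hG Ut hUt (sharp_compl hp₁) h2
      rw [Ut_nsmul Ut hUt (sharp_compl hp₁), Ut_unit hG Ut hUt (sharp_compl hp₁)] at h6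
      refine le_trans h6 (nsmul_le_nsmul_right (by simpa using sub_le_self u hp₁.1) (n+1))
    obtain ⟨p₃, hp₃, M1, M2⟩ := comp_S hG hu0 Ut hUt IC n (Ut (u - p₁) g) hg₂l hg₂u
    -- assemble the final projection
    set p₂ := u - q with hp₂def
    have hp₂ : SharpG u p₂ := sharp_compl hq
    obtain ⟨hshr, hrp₂, hrp₁, hcompr⟩ := Ut_meet hG Ut hUt hp₂ hp₁
    obtain ⟨hshs, hsp₃, hsup₁, hcomps⟩ := Ut_meet hG Ut hUt hp₃ (sharp_compl hp₁)
    have hrs : Ut p₂ p₁ + Ut p₃ (u - p₁) ≤ u := by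
      have h7 := add_le_add hrp₁ hsup₁
      rw [show p₁ + (u - p₁) = u from by abel] at h7
      exact h7
    obtain ⟨hsharp, hadd⟩ := Ut_orthsum hG Ut hUt hshr hshs hrs
    refine ⟨Ut p₂ p₁ + Ut p₃ (u - p₁), hsharp, ?_, ?_⟩
    · rw [hadd g, hcompr g, hcomps g]
      exact add_nonpos Hneg M1
    · -- complementary part
      obtain ⟨hshr', hr'q, hr'p₁, hcompr'⟩ := Ut_meet hG Ut hUt (sharp_compl hp₂) hp₁
      obtain ⟨hshs', hs'p₃, hs'up₁, hcomps'⟩ :=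
        Ut_meet hG Ut hUt (sharp_compl hp₃) (sharp_compl hp₁)
      have hr'val : Ut (u - p₂) p₁ = p₁ - Ut p₂ p₁ := Ut_compl_apply hG Ut hUt hp₂ p₁
      have hs'val : Ut (u - p₃) (u - p₁) = (u - p₁) - Ut p₃ (u - p₁) :=
        Ut_compl_apply hG Ut hUt hp₃ (u - p₁)
      have hcompl : u - (Ut p₂ p₁ + Ut p₃ (u - p₁))
          = Ut (u - p₂) p₁ + Ut (u - p₃) (u - p₁) := by
        rw [hr'val, hs'val]; abel
      have hr's' : Ut (u - p₂) p₁ + Ut (u - p₃) (u - p₁) ≤ u := by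
        rw [← hcompl]
        simpa using sub_le_self u
          (add_nonneg (Ut_nonneg Ut hUt hp₂ hp₁.1)
            (Ut_nonneg Ut hUt hp₃ (sub_nonneg.mpr hp₁.2.1)))
      obtain ⟨hsharp', hadd'⟩ := Ut_orthsum hG Ut hUt hshr' hshs' hr's'
      rw [hcompl, hadd' g, hcompr' g, hcomps' g]
      have Hpos' : 0 ≤ Ut (u - p₂) (Ut p₁ g) := by
        rw [hp₂def, sub_sub_cancel]
        exact Hpos
      exact add_nonneg Hpos' M2

end Comp

end Stmt7Aux

open EffectAlgebra in
/-- an abelian interpolation group `(G,u)` with order unit satisfies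
general comparability iff the effect algebra `[0,u]` (here represented by an
isomorphism `φ : E → [0,u] ⊆ G`), with the compression base `(U_p)_{p∈E_S}` of the
restrictions of the projections `Ũ_p` for sharp `p`, has the b-comparability
property. -/
theorem statement7 {G : Type u} [AddCommGroup G] [PartialOrder G]
    [CovariantClass G G (· + ·) (· ≤ ·)]
    (hG : RieszInterp G) (u : G) (hu : OrderUnit u)
    {E : Type u} (EA : EffectAlgebra E) (φ : E → G)
    (hφ0 : φ EA.zero = 0) (hφ1 : φ EA.one = u)
    (hmem : ∀ a : E, 0 ≤ φ a ∧ φ a ≤ u)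
    (hinj : Function.Injective φ)
    (hsurj : ∀ g : G, 0 ≤ g → g ≤ u → ∃ a : E, φ a = g)
    (hpadd : ∀ a b : E, ∀ c : E,
      (EA.padd a b = some c ↔ φ a + φ b ≤ u ∧ φ c = φ a + φ b))
    (Ut : G → G → G) (hUt : ∀ p : G, SharpG u p → IsIdealProj u p (Ut p))
    (CB : CompressionBase EA)
    (hP : ∀ p : E, p ∈ CB.P ↔ SharpG u (φ p))
    (hJ : ∀ p ∈ CB.P, ∀ a : E, φ (CB.J p a) = Ut (φ p) (φ a)) :
    (∀ x y : G, ∃ p : G, SharpG u p ∧ Ut p x ≤ Ut p y ∧ Ut (u - p) y ≤ Ut (u - p) x) ↔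
      BComparability EA CB := by
  -- Dictionary between the effect algebra `E` and the interval `[0,u]` in `G`.
  have hu0 : 0 ≤ u := hu.1
  have hle_phi : ∀ a b : E, EA.le a b → φ a ≤ φ b := by
    rintro a b ⟨c, hc⟩
    obtain ⟨h1, h2⟩ := (hpadd a c b).mp hc
    rw [h2]
    simpa using add_le_add_left (hmem c).1 (φ a)
  have hphi_le : ∀ a b : E, φ a ≤ φ b → EA.le a b := by
    intro a b h
    obtain ⟨c, hc⟩ := hsurj (φ b - φ a) (sub_nonneg.mpr h)
      (le_trans (by simpa using sub_le_sub_left (hmem a).1 (φ b)) (hmem b).2)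
    refine ⟨c, (hpadd a c b).mpr ⟨?_, ?_⟩⟩
    · rw [hc]
      have he : φ a + (φ b - φ a) = φ b := by abel
      rw [he]; exact (hmem b).2
    · rw [hc]; abel
  have hcompl_phi : ∀ a : E, φ (EA.compl a) = u - φ a := by
    intro a
    have hc : EA.padd a (EA.compl a) = some EA.one := (EA.orth_exists a).choose_spec
    obtain ⟨h1, h2⟩ := (hpadd a (EA.compl a) EA.one).mp hc
    rw [hφ1] at h2
    rw [eq_sub_iff_add_eq, add_comm]
    exact h2.symm
  have hP' : ∀ p ∈ CB.P, SharpG u (φ p) := fun p hp => (hP p).mp hp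
  have hcomplP : ∀ p ∈ CB.P, EA.compl p ∈ CB.P := by
    intro p hp
    rw [hP, hcompl_phi]
    exact Stmt7Aux.sharp_compl (hP' p hp)
  -- every element of `E` is compatible with every projection
  have hinC : ∀ p ∈ CB.P, ∀ a : E, inC EA CB a p := by
    intro p hp a
    show EA.padd (CB.J p a) (CB.J (EA.compl p) a) = some a
    apply (hpadd _ _ a).mpr
    have e1 : φ (CB.J p a) = Ut (φ p) (φ a) := hJ p hp a
    have e2 : φ (CB.J (EA.compl p) a) = Ut (u - φ p) (φ a) := by
      rw [hJ (EA.compl p) (hcomplP p hp) a, hcompl_phi p]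
    have e3 : Ut (u - φ p) (φ a) = φ a - Ut (φ p) (φ a) :=
      Stmt7Aux.Ut_compl_apply hG Ut hUt (hP' p hp) (φ a)
    constructor
    · rw [e1, e2, e3]
      have he : Ut (φ p) (φ a) + (φ a - Ut (φ p) (φ a)) = φ a := by abel
      rw [he]; exact (hmem a).2
    · rw [e1, e2, e3]; abel
  have hzeroP : EA.zero ∈ CB.P := by
    rw [hP, hφ0]
    exact ⟨le_rfl, hu0, fun x h0 h1 _ => le_antisymm h1 h0⟩
  have honeP : EA.one ∈ CB.P := by
    rw [hP, hφ1]
    refine ⟨hu0, le_rfl, fun x h0 _ h2 => ?_⟩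
    rw [sub_self] at h2
    exact le_antisymm h2 h0
  have hpz : ∀ a : E, EA.padd EA.zero a = some a := by
    intro a
    apply (hpadd _ _ _).mpr
    rw [hφ0, zero_add]
    exact ⟨(hmem a).2, rfl⟩
  have hpz' : ∀ a : E, EA.padd a EA.zero = some a := fun a => by
    rw [EA.comm]; exact hpz a
  have hcompl0 : EA.compl EA.zero = EA.one :=
    EA.orth_unique EA.zero _ _ (EA.orth_exists EA.zero).choose_spec (hpz EA.one)
  have hcompl1 : EA.compl EA.one = EA.zero :=
    EA.orth_unique EA.one _ _ (EA.orth_exists EA.one).choose_spec (hpz' EA.one)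
  -- any two projections are Mackey compatible
  have hMackey : ∀ p ∈ CB.P, ∀ q ∈ CB.P, EA.Mackey p q := by
    intro p hp q hq
    have hsp := hP' p hp
    have hsq := hP' q hq
    have hc0 : 0 ≤ Ut (φ q) (φ p) := Stmt7Aux.Ut_nonneg Ut hUt hsq (hmem p).1
    have hcq : Ut (φ q) (φ p) ≤ φ q := by
      have := Stmt7Aux.Ut_le_of_le hG Ut hUt hsq (hmem p).2
      rwa [Stmt7Aux.Ut_unit hG Ut hUt hsq] at this
    obtain ⟨c, hcφ⟩ := hsurj _ hc0 (le_trans hcq (hmem q).2)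
    have ha10 : 0 ≤ Ut (u - φ q) (φ p) :=
      Stmt7Aux.Ut_nonneg Ut hUt (Stmt7Aux.sharp_compl hsq) (hmem p).1
    have ha1uq : Ut (u - φ q) (φ p) ≤ u - φ q := by
      have := Stmt7Aux.Ut_le_of_le hG Ut hUt (Stmt7Aux.sharp_compl hsq) (hmem p).2
      rwa [Stmt7Aux.Ut_unit hG Ut hUt (Stmt7Aux.sharp_compl hsq)] at this
    obtain ⟨a1, ha1φ⟩ := hsurj _ ha10
      (le_trans ha1uq (by simpa using sub_le_self u hsq.1))
    have hb10 : 0 ≤ φ q - Ut (φ q) (φ p) := sub_nonneg.mpr hcq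
    obtain ⟨b1, hb1φ⟩ := hsurj _ hb10
      (le_trans (by simpa using sub_le_self (φ q) hc0) (hmem q).2)
    have hsum_e : Ut (u - φ q) (φ p) + φ q ≤ u := by
      have := add_le_add_left ha1uq (φ q)
      rwa [sub_add_cancel] at this
    have hd0 : 0 ≤ φ a1 + φ b1 := add_nonneg (hmem a1).1 (hmem b1).1
    have hdu : φ a1 + φ b1 ≤ u := by
      rw [ha1φ, hb1φ]
      calc Ut (u - φ q) (φ p) + (φ q - Ut (φ q) (φ p))
          ≤ Ut (u - φ q) (φ p) + φ q :=
            add_le_add_right (by simpa using sub_le_self (φ q) hc0) _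
        _ ≤ u := hsum_e
    obtain ⟨d, hdφ⟩ := hsurj _ hd0 hdu
    have he'val : φ d + φ c = Ut (u - φ q) (φ p) + φ q := by
      rw [hdφ, ha1φ, hb1φ, hcφ]; abel
    have he'0 : 0 ≤ φ d + φ c := add_nonneg (hmem d).1 (hmem c).1
    have he'u : φ d + φ c ≤ u := by rw [he'val]; exact hsum_e
    obtain ⟨e', he'φ⟩ := hsurj _ he'0 he'u
    have hUcompl : Ut (u - φ q) (φ p) = φ p - Ut (φ q) (φ p) :=
      Stmt7Aux.Ut_compl_apply hG Ut hUt hsq (φ p)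
    refine ⟨a1, b1, c, d, e', (hpadd _ _ _).mpr ⟨hdu, hdφ⟩,
      (hpadd _ _ _).mpr ⟨he'u, he'φ⟩, (hpadd _ _ _).mpr ⟨?_, ?_⟩,
      (hpadd _ _ _).mpr ⟨?_, ?_⟩⟩
    · rw [ha1φ, hcφ, hUcompl]
      have he : φ p - Ut (φ q) (φ p) + Ut (φ q) (φ p) = φ p := by abel
      rw [he]; exact (hmem p).2
    · rw [ha1φ, hcφ, hUcompl]; abel
    · rw [hb1φ, hcφ]
      have he : φ q - Ut (φ q) (φ p) + Ut (φ q) (φ p) = φ q := by abel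
      rw [he]; exact (hmem q).2
    · rw [hb1φ, hcφ]; abel
  have hCommute : ∀ e f : E, CommuteEl EA CB e f := by
    intro e f p hpmem q hqmem
    exact hMackey p hpmem.1.1 q hqmem.1.1
  -- the b-property, with Boolean algebra {0, 1}
  have hBProp : BProperty EA CB := by
    intro a
    refine ⟨{EA.zero, EA.one}, ⟨?_, ?_, ?_⟩, ?_⟩
    · intro x hx
      rcases hx with rfl | hx
      · exact hzeroP
      · rw [Set.mem_singleton_iff] at hx
        subst hx; exact honeP
    · refine ⟨Set.mem_insert _ _, Set.mem_insert_of_mem _ rfl, ?_, ?_⟩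
      · intro x hx
        rcases hx with rfl | hx
        · rw [hcompl0]; exact Set.mem_insert_of_mem _ rfl
        · rw [Set.mem_singleton_iff] at hx
          subst hx
          rw [hcompl1]; exact Set.mem_insert _ _
      · intro x hx y hy z hz
        obtain ⟨hzle, hzeq⟩ := (hpadd x y z).mp hz
        rcases hx with rfl | hx
        · rcases hy with rfl | hy
          · have : φ z = φ EA.zero := by rw [hzeq, hφ0, add_zero]
            rw [hinj this]; exact Set.mem_insert _ _
          · rw [Set.mem_singleton_iff] at hy; subst hy
            have : φ z = φ EA.one := by rw [hzeq, hφ0, zero_add]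
            rw [hinj this]; exact Set.mem_insert_of_mem _ rfl
        · rw [Set.mem_singleton_iff] at hx; subst hx
          rcases hy with rfl | hy
          · have : φ z = φ EA.one := by rw [hzeq, hφ0, add_zero]
            rw [hinj this]; exact Set.mem_insert_of_mem _ rfl
          · rw [Set.mem_singleton_iff] at hy; subst hy
            rw [hφ1] at hzeq hzle
            have huneg : u ≤ 0 := by
              have := sub_le_sub_right hzle u
              simpa using this
            have hu00 : u = 0 := le_antisymm huneg hu0
            have : φ z = φ EA.zero := by rw [hzeq, hφ0, hu00, add_zero]
            rw [hinj this]; exact Set.mem_insert _ _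
    · intro p' hp' q' hq'
      have hmz : EA.zero ∈ ({EA.zero, EA.one} : Set E) := Set.mem_insert _ _
      have hmo : EA.one ∈ ({EA.zero, EA.one} : Set E) := Set.mem_insert_of_mem _ rfl
      rcases hp' with rfl | hp'
      · rcases hq' with rfl | hq'
        · exact ⟨EA.zero, hmz, EA.zero, hmz, EA.zero, hmz, EA.zero, EA.zero,
            hpz _, hpz _, hpz _, hpz _⟩
        · rw [Set.mem_singleton_iff] at hq'; subst hq'
          exact ⟨EA.zero, hmz, EA.one, hmo, EA.zero, hmz, EA.one, EA.one,
            hpz _, hpz' _, hpz _, hpz' _⟩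
      · rw [Set.mem_singleton_iff] at hp'; subst hp'
        rcases hq' with rfl | hq'
        · exact ⟨EA.one, hmo, EA.zero, hmz, EA.zero, hmz, EA.one, EA.one,
            hpz' _, hpz' _, hpz' _, hpz _⟩
        · rw [Set.mem_singleton_iff] at hq'; subst hq'
          exact ⟨EA.zero, hmz, EA.zero, hmz, EA.one, hmo, EA.zero, EA.one,
            hpz _, hpz _, hpz _, hpz _⟩
    · intro p hpP
      constructor
      · intro _ b _
        exact hinC p hpP b
      · intro _
        exact hinC p hpP a
  constructor
  · -- general comparability implies b-comparability
    intro hGC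
    refine ⟨hBProp, ?_⟩
    intro e f _
    obtain ⟨pG, hpG, hle1, hle2⟩ := hGC (φ e) (φ f)
    obtain ⟨p, hpφ⟩ := hsurj pG hpG.1 hpG.2.1
    have hpP : p ∈ CB.P := (hP p).mpr (by rw [hpφ]; exact hpG)
    refine ⟨p, ⟨hpP, fun a _ => hinC p hpP a⟩, ?_, ?_⟩
    · apply hphi_le
      rw [hJ p hpP e, hJ p hpP f, hpφ]
      exact hle1
    · apply hphi_le
      rw [hJ _ (hcomplP p hpP) f, hJ _ (hcomplP p hpP) e, hcompl_phi p, hpφ]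
      exact hle2
  · -- b-comparability implies general comparability
    intro hB x y
    have IC : ∀ e f : G, 0 ≤ e → e ≤ u → 0 ≤ f → f ≤ u →
        ∃ p, SharpG u p ∧ Ut p e ≤ Ut p f ∧ Ut (u - p) f ≤ Ut (u - p) e := by
      intro e f he0 heu hf0 hfu
      obtain ⟨a, ha⟩ := hsurj e he0 heu
      obtain ⟨b, hb⟩ := hsurj f hf0 hfu
      obtain ⟨p, hpPle⟩ := hB.2 a b (hCommute a b)
      obtain ⟨hpPset, hle1, hle2⟩ := hpPle
      have hpP : p ∈ CB.P := hpPset.1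
      refine ⟨φ p, hP' p hpP, ?_, ?_⟩
      · have := hle_phi _ _ hle1
        rwa [hJ p hpP a, hJ p hpP b, ha, hb] at this
      · have := hle_phi _ _ hle2
        rwa [hJ _ (hcomplP p hpP) b, hJ _ (hcomplP p hpP) a, hcompl_phi p, ha, hb] at this
    obtain ⟨n₁, hn₁⟩ := hu.2 (x - y)
    obtain ⟨n₂, hn₂⟩ := hu.2 (y - x)
    have hb1 : x - y ≤ (n₁+1) • u := by
      refine le_trans hn₁ ?_
      rw [succ_nsmul]
      simpa using add_le_add_left hu0 (n₁ • u)
    have hb2 : -((n₂+1) • u) ≤ x - y := by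
      have h' : -(n₂ • u) ≤ x - y := by
        have := neg_le_neg_iff.mpr hn₂
        rwa [neg_sub] at this
      refine le_trans ?_ h'
      apply neg_le_neg_iff.mpr
      rw [succ_nsmul]
      simpa using add_le_add_left hu0 (n₂ • u)
    obtain ⟨p, hp, hneg, hpos⟩ :=
      Stmt7Aux.comp_T hG hu0 Ut hUt IC n₂ n₁ (x - y) hb2 hb1
    refine ⟨p, hp, ?_, ?_⟩
    · have h := (hUt p hp).1 (x - y) y
      rw [sub_add_cancel] at h
      rw [h]
      simpa using add_le_add_right hneg (Ut p y)
    · have h := (hUt (u - p) (Stmt7Aux.sharp_compl hp)).1 (x - y) y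
      rw [sub_add_cancel] at h
      rw [h]
      simpa using add_le_add_right hpos (Ut (u - p) y)
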